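/- Let a₁b₁a₂b₂ be a rectangle inscribed in the unit circle centered at the origin, with a₁ = (cos θ, sin θ), b₁ = (−cos θ, sin θ), a₂ = −a₁, b₂ = −b₁ for some θ ∈ (0°, 90°). Consider any finite directed graph drawn in the plane (vertices are points, directed edges are straight segments measured in Euclidean length) that contains a directed path from a₁ to b₁, from a₁ to b₂, from a₂ to b₁, and from a₂ to b₂. Then the total Euclidean length of its edges is at least 4. -/

import Mathlib

open Real

/-- There is a directed path from `a` to `b` using the directed edges in `E`. -/
def HasDirPath (E : Finset ((ℝ × ℝ) × (ℝ × ℝ))) (a b : ℝ × ℝ) : Prop :=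
  Relation.ReflTransGen (fun x y => (x, y) ∈ E) a b

/-- The Euclidean length of a straight segment in `ℝ²`. -/
noncomputable def euclLen (e : (ℝ × ℝ) × (ℝ × ℝ)) : ℝ :=
  Real.sqrt ((e.1.1 - e.2.1) ^ 2 + (e.1.2 - e.2.2) ^ 2)

/-- Strengthen a chain relation when every vertex (except possibly the last)
satisfies a predicate that upgrades the relation. -/
lemma chain_strengthen {α : Type*} {R R' : α → α → Prop} :
    ∀ (l : List α) (c : α), (∀ x y, x ∈ c :: l → R x y → R' x y) →
      List.Chain R c l → List.Chain R' c l := by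
  intro l
  induction l with
  | nil => intro c _ _; exact List.Chain.nil
  | cons d t ih =>
    intro c h hc
    unfold List.Chain at hc ⊢
    rw [List.chain_cons] at hc ⊢
    exact ⟨h c d (by simp) hc.1, ih d (fun x y hx => h x y (by simp [List.mem_cons] at hx ⊢; tauto)) hc.2⟩

/-- Key potential lemma: along any walk through edges of `E` from `a` to `b`,
the drop of a potential `φ` is bounded by the sum over all edges of the
positive part of the drop along that edge. -/
lemma walk_sum_bound {α : Type*} [DecidableEq α] (φ : α → ℝ) :
    ∀ (n : ℕ) (l : List α) (a b : α) (E : Finset (α × α)), l.length ≤ n →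
      List.Chain (fun x y => (x, y) ∈ E) a l →
      (a :: l).getLast (List.cons_ne_nil _ _) = b →
      φ a - φ b ≤ ∑ e ∈ E, max (φ e.1 - φ e.2) 0 := by
  intro n
  induction n with
  | zero =>
    intro l a b E hlen _ hlast
    have hl : l = [] := List.length_eq_zero_iff.mp (Nat.le_zero.mp hlen)
    subst hl
    simp at hlast
    subst hlast
    simp only [sub_self]
    exact Finset.sum_nonneg fun e _ => le_max_right _ _
  | succ n ih =>
    intro l a b E hlen hchain hlast
    match l with
    | [] =>
      simp at hlast
      subst hlast
      simp only [sub_self]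
      exact Finset.sum_nonneg fun e _ => le_max_right _ _
    | c :: t =>
      by_cases hmem : a ∈ c :: t
      · -- splice out the cycle back to `a`
        obtain ⟨l₁, l₂, hsplit⟩ := List.append_of_mem hmem
        rw [hsplit] at hchain hlast
        have hchain₂ : List.Chain (fun x y => (x, y) ∈ E) a l₂ :=
          (List.isChain_cons_split.mp hchain).2
        have hlast₂ : (a :: l₂).getLast (List.cons_ne_nil _ _) = b := by
          rw [← hlast]
          exact (List.getLast_append_of_ne_nil (l := a :: l₁) (List.cons_ne_nil _ _) (List.cons_ne_nil _ _)).symm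
        have hlen₂ : l₂.length ≤ n := by
          have : (c :: t).length ≤ n + 1 := hlen
          rw [hsplit] at this
          simp [List.length_append] at this
          omega
        exact ih l₂ a b E hlen₂ hchain₂ hlast₂
      · -- first edge is never reused
        unfold List.Chain at hchain
        rw [List.chain_cons] at hchain
        obtain ⟨hac, hrest⟩ := hchain
        have hchain' : List.Chain (fun x y => (x, y) ∈ E.erase (a, c)) c t := by
          refine chain_strengthen (R := fun x y => (x, y) ∈ E) t c ?_ hrest
          intro x y hx hxy
          refine Finset.mem_erase.mpr ⟨?_, hxy⟩
          intro hcontra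
          apply hmem
          have : x = a := by
            have := congrArg Prod.fst hcontra
            simpa using this
          rwa [← this]
        have hlast' : (c :: t).getLast (List.cons_ne_nil _ _) = b := by
          rw [← hlast]
          exact (List.getLast_cons (List.cons_ne_nil _ _)).symm
        have hlen' : t.length ≤ n := by simpa using hlen
        have hIH := ih t c b (E.erase (a, c)) hlen' hchain' hlast'
        have hsum : ∑ e ∈ E, max (φ e.1 - φ e.2) 0 =
            max (φ a - φ c) 0 + ∑ e ∈ E.erase (a, c), max (φ e.1 - φ e.2) 0 :=
          (Finset.add_sum_erase E _ hac).symm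
        have h1 : φ a - φ c ≤ max (φ a - φ c) 0 := le_max_left _ _
        linarith
      
/-- Potential bound for directed paths. -/
lemma path_bound (E : Finset ((ℝ × ℝ) × (ℝ × ℝ))) (a b : ℝ × ℝ)
    (h : HasDirPath E a b) (φ : ℝ × ℝ → ℝ) :
    φ a - φ b ≤ ∑ e ∈ E, max (φ e.1 - φ e.2) 0 := by
  classical
  obtain ⟨l, hl₁, hl₂⟩ := List.exists_isChain_cons_of_relationReflTransGen h
  exact walk_sum_bound φ l.length l a b E le_rfl hl₁ hl₂

/-- Any directed network connecting the two sources `a₁, a₂ = -a₁` to the two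
sinks `b₁, b₂ = -b₁` of a rectangle inscribed in the unit circle has total
Euclidean length at least `4`. -/
theorem rectangle_network_length_ge_four (θ : ℝ) (hθ0 : 0 < θ) (hθ1 : θ < π / 2)
    (a₁ b₁ a₂ b₂ : ℝ × ℝ)
    (ha₁ : a₁ = (Real.cos θ, Real.sin θ)) (hb₁ : b₁ = (-Real.cos θ, Real.sin θ))
    (ha₂ : a₂ = -a₁) (hb₂ : b₂ = -b₁)
    (E : Finset ((ℝ × ℝ) × (ℝ × ℝ)))
    (h11 : HasDirPath E a₁ b₁) (h12 : HasDirPath E a₁ b₂)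
    (h21 : HasDirPath E a₂ b₁) (h22 : HasDirPath E a₂ b₂) :
    4 ≤ ∑ e ∈ E, euclLen e := by
  set c := Real.cos θ with hc
  set s := Real.sin θ with hs
  have hc0 : 0 < c := Real.cos_pos_of_mem_Ioo ⟨by linarith [Real.pi_pos], hθ1⟩
  have hs0 : 0 < s := Real.sin_pos_of_pos_of_lt_pi hθ0 (by linarith [Real.pi_pos, Real.pi_gt_three])
  have hcs : c ^ 2 + s ^ 2 = 1 := by
    rw [hc, hs]; rw [add_comm]; exact Real.sin_sq_add_cos_sq θ
  -- four potentials
  have H1 := path_bound E a₁ b₁ h11 (fun p => c * p.1)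
  have H2 := path_bound E a₂ b₂ h22 (fun p => -c * p.1)
  have H3 := path_bound E a₁ b₂ h12 (fun p => s * p.2)
  have H4 := path_bound E a₂ b₁ h21 (fun p => -s * p.2)
  rw [ha₁, hb₁] at H1
  rw [ha₁, hb₂, hb₁] at H3
  rw [ha₂, ha₁, hb₂, hb₁] at H2
  rw [ha₂, ha₁, hb₁] at H4
  simp only [Prod.fst_neg, Prod.snd_neg, Prod.fst, Prod.snd] at H1 H2 H3 H4
  -- per-edge comparison with the Euclidean length
  have key : ∀ e ∈ E,
      max (c * e.1.1 - c * e.2.1) 0 + max (-c * e.1.1 - -c * e.2.1) 0 +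
      max (s * e.1.2 - s * e.2.2) 0 + max (-s * e.1.2 - -s * e.2.2) 0 ≤ euclLen e := by
    intro e _
    set u := e.1.1 - e.2.1 with hu
    set v := e.1.2 - e.2.2 with hv
    have e1 : c * e.1.1 - c * e.2.1 = c * u := by ring
    have e2 : -c * e.1.1 - -c * e.2.1 = -(c * u) := by rw [hu]; ring
    have e3 : s * e.1.2 - s * e.2.2 = s * v := by ring
    have e4 : -s * e.1.2 - -s * e.2.2 = -(s * v) := by rw [hv]; ring
    rw [e1, e2, e3, e4]
    have habs1 : max (c * u) 0 + max (-(c * u)) 0 = |c * u| :=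
      max_zero_add_max_neg_zero_eq_abs_self (c * u)
    have habs2 : max (s * v) 0 + max (-(s * v)) 0 = |s * v| :=
      max_zero_add_max_neg_zero_eq_abs_self (s * v)
    have goal2 : |c * u| + |s * v| ≤ euclLen e := by
      unfold euclLen
      rw [← hu, ← hv]
      rw [abs_mul, abs_mul, abs_of_pos hc0, abs_of_pos hs0]
      rw [show c * |u| + s * |v| ≤ Real.sqrt (u ^ 2 + v ^ 2) ↔ _ from
        Real.le_sqrt (by positivity) (by positivity)]
      have h1 : |u| ^ 2 = u ^ 2 := sq_abs u
      have h2 : |v| ^ 2 = v ^ 2 := sq_abs v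
      nlinarith [sq_nonneg (c * |v| - s * |u|), abs_nonneg u, abs_nonneg v]
    linarith
  have hsum : ∑ e ∈ E,
      (max (c * e.1.1 - c * e.2.1) 0 + max (-c * e.1.1 - -c * e.2.1) 0 +
       max (s * e.1.2 - s * e.2.2) 0 + max (-s * e.1.2 - -s * e.2.2) 0) ≤
      ∑ e ∈ E, euclLen e := Finset.sum_le_sum key
  rw [show (∑ e ∈ E,
      (max (c * e.1.1 - c * e.2.1) 0 + max (-c * e.1.1 - -c * e.2.1) 0 +
       max (s * e.1.2 - s * e.2.2) 0 + max (-s * e.1.2 - -s * e.2.2) 0)) =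
      (∑ e ∈ E, max (c * e.1.1 - c * e.2.1) 0) +
      (∑ e ∈ E, max (-c * e.1.1 - -c * e.2.1) 0) +
      (∑ e ∈ E, max (s * e.1.2 - s * e.2.2) 0) +
      (∑ e ∈ E, max (-s * e.1.2 - -s * e.2.2) 0) by
    rw [← Finset.sum_add_distrib, ← Finset.sum_add_distrib, ← Finset.sum_add_distrib]] at hsum
  nlinarith [H1, H2, H3, H4, hsum, hcs]
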